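/- In a hyperbolic triangle with side lengths l_ij, l_jk, l_ik satisfying the strict triangle inequalities, the inner angles θ_i, θ_j, θ_k given by the hyperbolic law of cosines satisfy θ_i + θ_j + θ_k < π. -/

import Mathlib

open Real

set_option maxHeartbeats 1000000

private lemma arccos_lt_pi' {x : ℝ} (h : -1 < x) : Real.arccos x < π :=
  lt_of_le_of_ne (Real.arccos_le_pi x) (fun he => absurd (Real.arccos_eq_pi.1 he) (not_le.2 h))

/-- Angle deficit in hyperbolic triangles: if side lengths `lij, ljk, lik` satisfy the
strict triangle inequalities, the inner angles given by the hyperbolic law of cosines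
sum to strictly less than `π`. -/
theorem hyperbolic_angle_sum_lt_pi (lij ljk lik : ℝ)
    (hij : 0 < lij) (hjk : 0 < ljk) (hik : 0 < lik)
    (h₁ : lij < ljk + lik) (h₂ : ljk < lij + lik) (h₃ : lik < lij + ljk) :
    arccos ((Real.cosh lij * Real.cosh lik - Real.cosh ljk) /
        (Real.sinh lij * Real.sinh lik)) +
      arccos ((Real.cosh lij * Real.cosh ljk - Real.cosh lik) /
        (Real.sinh lij * Real.sinh ljk)) +
      arccos ((Real.cosh lik * Real.cosh ljk - Real.cosh lij) /
        (Real.sinh lik * Real.sinh ljk)) < π := by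
  set x := Real.cosh lij with hxd
  set y := Real.cosh lik with hyd
  set z := Real.cosh ljk with hzd
  set sa := Real.sinh lij with hsad
  set sb := Real.sinh lik with hsbd
  set sc := Real.sinh ljk with hscd
  have hx : 1 < x := Real.one_lt_cosh.2 hij.ne'
  have hy : 1 < y := Real.one_lt_cosh.2 hik.ne'
  have hz : 1 < z := Real.one_lt_cosh.2 hjk.ne'
  have hsa : 0 < sa := Real.sinh_pos_iff.2 hij
  have hsb : 0 < sb := Real.sinh_pos_iff.2 hik
  have hsc : 0 < sc := Real.sinh_pos_iff.2 hjk
  have sa2 : sa ^ 2 = x ^ 2 - 1 := Real.sinh_sq lij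
  have sb2 : sb ^ 2 = y ^ 2 - 1 := Real.sinh_sq lik
  have sc2 : sc ^ 2 = z ^ 2 - 1 := Real.sinh_sq ljk
  -- cosh comparisons coming from the triangle inequalities
  have P1 : z < x * y + sa * sb := by
    have h : Real.cosh ljk < Real.cosh (lij + lik) := by
      rw [Real.cosh_lt_cosh, abs_of_pos hjk, abs_of_pos (by linarith)]; exact h₂
    rwa [Real.cosh_add] at h
  have P2 : x * y - sa * sb < z := by
    have h : Real.cosh (lij - lik) < Real.cosh ljk := by
      rw [Real.cosh_lt_cosh, abs_of_pos hjk, abs_lt]; constructor <;> linarith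
    rwa [Real.cosh_sub] at h
  have P6 : y * z - sb * sc < x := by
    have h : Real.cosh (lik - ljk) < Real.cosh lij := by
      rw [Real.cosh_lt_cosh, abs_of_pos hij, abs_lt]; constructor <;> linarith
    rwa [Real.cosh_sub] at h
  set Q : ℝ := 1 + 2 * x * y * z - x ^ 2 - y ^ 2 - z ^ 2 with hQd
  have hQeq : Q = (x * y + sa * sb - z) * (z - (x * y - sa * sb)) := by
    rw [hQd]
    linear_combination (-(x ^ 2 - 1)) * sb2 + (-(sb ^ 2)) * sa2
  have hQ : 0 < Q := by
    rw [hQeq]; exact mul_pos (by linarith) (by linarith)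
  -- the three cosine values
  set vA : ℝ := (x * y - z) / (sa * sb) with hvAd
  set vB : ℝ := (x * z - y) / (sa * sc) with hvBd
  set vC : ℝ := (y * z - x) / (sb * sc) with hvCd
  have hab : 0 < sa * sb := mul_pos hsa hsb
  have hac : 0 < sa * sc := mul_pos hsa hsc
  have hbc : 0 < sb * sc := mul_pos hsb hsc
  have hsqA : (sa * sb) ^ 2 - (x * y - z) ^ 2 = Q := by
    rw [hQd]; linear_combination sb ^ 2 * sa2 + (x ^ 2 - 1) * sb2
  have hsqB : (sa * sc) ^ 2 - (x * z - y) ^ 2 = Q := by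
    rw [hQd]; linear_combination sc ^ 2 * sa2 + (x ^ 2 - 1) * sc2
  have hsqC : (sb * sc) ^ 2 - (y * z - x) ^ 2 = Q := by
    rw [hQd]; linear_combination sc ^ 2 * sb2 + (y ^ 2 - 1) * sc2
  have hbdA := abs_lt_of_sq_lt_sq' (a := x * y - z) (b := sa * sb) (by linarith) hab.le
  have hbdB := abs_lt_of_sq_lt_sq' (a := x * z - y) (b := sa * sc) (by linarith) hac.le
  have hbdC := abs_lt_of_sq_lt_sq' (a := y * z - x) (b := sb * sc) (by linarith) hbc.le
  have hvA1 : vA < 1 := (div_lt_one hab).2 hbdA.2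
  have hvA2 : -1 < vA := by rw [hvAd, lt_div_iff₀ hab]; linarith [hbdA.1]
  have hvB1 : vB < 1 := (div_lt_one hac).2 hbdB.2
  have hvB2 : -1 < vB := by rw [hvBd, lt_div_iff₀ hac]; linarith [hbdB.1]
  have hvC1 : vC < 1 := (div_lt_one hbc).2 hbdC.2
  have hvC2 : -1 < vC := by rw [hvCd, lt_div_iff₀ hbc]; linarith [hbdC.1]
  set A := Real.arccos vA with hAd
  set B := Real.arccos vB with hBd
  set C := Real.arccos vC with hCd
  have hA0 : 0 < A := Real.arccos_pos.2 hvA1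
  have hB0 : 0 < B := Real.arccos_pos.2 hvB1
  have hC0 : 0 < C := Real.arccos_pos.2 hvC1
  have hAp : A < π := arccos_lt_pi' hvA2
  have hBp : B < π := arccos_lt_pi' hvB2
  have cosA : Real.cos A = vA := Real.cos_arccos hvA2.le hvA1.le
  have cosB : Real.cos B = vB := Real.cos_arccos hvB2.le hvB1.le
  have cosC : Real.cos C = vC := Real.cos_arccos hvC2.le hvC1.le
  -- A + B < π
  have hABsum : 0 < vA + vB := by
    have hfac : (x * y - z) * sc + (x * z - y) * sb
        = (y * sc + z * sb) * (x - (y * z - sb * sc)) := by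
      linear_combination (-(y * sb)) * sc2 + (-(z * sc)) * sb2
    have hnum : 0 < (x * y - z) * sc + (x * z - y) * sb := by
      rw [hfac]
      exact mul_pos (by positivity) (by linarith)
    have heq : vA + vB = ((x * y - z) * sc + (x * z - y) * sb) / (sa * sb * sc) := by
      rw [hvAd, hvBd]; field_simp
    rw [heq]; positivity
  have hAB : A + B < π := by
    have hmem1 : A ∈ Set.Icc 0 π := ⟨hA0.le, Real.arccos_le_pi vA⟩
    have hmem2 : π - B ∈ Set.Icc 0 π := ⟨by linarith, by linarith⟩
    have hcos : Real.cos (π - B) < Real.cos A := by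
      rw [Real.cos_pi_sub, cosA, cosB]; linarith
    have := (Real.strictAntiOn_cos.lt_iff_gt hmem2 hmem1).1 hcos
    linarith
  -- key identities
  have e1 : 1 - vA ^ 2 = Q / (sa * sb) ^ 2 := by
    rw [hvAd, div_pow, ← hsqA, sub_div, div_self (by positivity : ((sa * sb) ^ 2 : ℝ) ≠ 0)]
  have e2 : 1 - vB ^ 2 = Q / (sa * sc) ^ 2 := by
    rw [hvBd, div_pow, ← hsqB, sub_div, div_self (by positivity : ((sa * sc) ^ 2 : ℝ) ≠ 0)]
  have e3n : (y * z - x) * sa ^ 2 + (x * y - z) * (x * z - y) = x * Q := by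
    rw [hQd]; linear_combination (y * z - x) * sa2
  have e3 : vC + vA * vB = x * Q / (sa ^ 2 * sb * sc) := by
    rw [hvCd, hvAd, hvBd, ← e3n]
    field_simp
  have sinAB : Real.sin A * Real.sin B = Q / (sa ^ 2 * sb * sc) := by
    rw [hAd, hBd, Real.sin_arccos, Real.sin_arccos, e1, e2,
      Real.sqrt_div hQ.le, Real.sqrt_div hQ.le, Real.sqrt_sq hab.le, Real.sqrt_sq hac.le,
      div_mul_div_comm, Real.mul_self_sqrt hQ.le]
    congr 1
    ring
  have hmain : Real.cos (π - (A + B)) < Real.cos C := by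
    rw [Real.cos_pi_sub, Real.cos_add, cosA, cosB, cosC, sinAB]
    have hQx : Q < x * Q := (lt_mul_iff_one_lt_left hQ).2 hx
    have hlt : Q / (sa ^ 2 * sb * sc) < x * Q / (sa ^ 2 * sb * sc) := by
      gcongr
    rw [← e3] at hlt
    linarith
  have hfin : C < π - (A + B) := by
    have hmemC : C ∈ Set.Icc 0 π := ⟨Real.arccos_nonneg vC, Real.arccos_le_pi vC⟩
    have hmemD : π - (A + B) ∈ Set.Icc 0 π := ⟨by linarith, by linarith⟩
    exact (Real.strictAntiOn_cos.lt_iff_gt hmemD hmemC).1 hmain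
  linarith
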